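/- arXiv:0906.1234 — 2 statements merged into one kernel-verified Lean document; each statement's English description precedes it below -/
import Mathlib

section
/- Let d ≥ 1 be an integer, α ∈ (0,2), and a > 0. Set s := max(1, a) and t₀ := s^α (so t₀ ≥ 1 and s = t₀^{1/α}). Let D ⊆ ℝ^d be an open set with H_a ⊆ D ⊆ H_0. Then there exists a constant c > 0, depending only on α and a, such that for every x ∈ D and every real t > 5^α t₀, writing x₀ := x + 2s·e_d where e_d is the d-th standard basis vector, one has c⁻¹ · (min(1, δ_D(x)^α)) · (min(1, δ_{H_0}(x₀)^α / t)) ≤ min(1, δ_D(x)^α / t) ≤ c · (min(1, δ_D(x)^α)) · (min(1, δ_{H_a}(x₀)^α / t)). -/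
open Metric

/-- The open half-space `{x ∈ ℝ^d : x_d > a}`. -/
def halfSpace (d : ℕ) (hd : 0 < d) (a : ℝ) : Set (EuclideanSpace ℝ (Fin d)) :=
  {x | a < x ⟨d - 1, Nat.sub_lt hd one_pos⟩}

lemma coreMin (u n m c t : ℝ) (hu : 0 ≤ u) (hn0 : 0 ≤ n) (hc : 1 ≤ c) (ht : 1 ≤ t)
    (hn : n ≤ c * max 1 u) (hm1 : 1 ≤ m) (hmu : u ≤ m) :
    c⁻¹ * min 1 u * min 1 (n / t) ≤ min 1 (u / t) ∧
      min 1 (u / t) ≤ c * min 1 u * min 1 (m / t) := by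
  have ht0 : 0 < t := lt_of_lt_of_le one_pos ht
  have hc0 : 0 < c := lt_of_lt_of_le one_pos hc
  constructor
  · rw [mul_assoc, inv_mul_le_iff₀ hc0]
    rcases le_total u 1 with h1 | h1
    · have hmax : max 1 u = 1 := max_eq_left h1
      have hut : u / t ≤ 1 := by
        calc u / t ≤ u / 1 := by gcongr
        _ = u := div_one u
        _ ≤ 1 := h1
      rw [min_eq_right hut, min_eq_right h1]
      calc u * min 1 (n / t) ≤ u * (n / t) := by
            exact mul_le_mul_of_nonneg_left (min_le_right _ _) hu
        _ ≤ u * (c / t) := by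
            apply mul_le_mul_of_nonneg_left _ hu
            gcongr
            simpa [hmax] using hn
        _ = c * (u / t) := by ring
    · have hmax : max 1 u = u := max_eq_right h1
      rw [min_eq_left h1, one_mul]
      rcases le_total 1 (u / t) with h2 | h2
      · rw [min_eq_left h2]
        calc min 1 (n / t) ≤ 1 := min_le_left _ _
          _ ≤ c * 1 := by simpa using hc
      · rw [min_eq_right h2]
        calc min 1 (n / t) ≤ n / t := min_le_right _ _
          _ ≤ c * u / t := by
              gcongr
              simpa [hmax] using hn
          _ = c * (u / t) := by ring
  · have key : min 1 (u / t) ≤ min 1 u * min 1 (m / t) := by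
      rcases le_total u 1 with h1 | h1
      · have hut : u / t ≤ 1 := by
          calc u / t ≤ u / 1 := by gcongr
          _ = u := div_one u
          _ ≤ 1 := h1
        rw [min_eq_right hut, min_eq_right h1]
        rw [mul_min_of_nonneg _ _ hu]
        apply le_min
        · calc u / t ≤ u / 1 := by gcongr
            _ = u := div_one u
            _ = u * 1 := (mul_one u).symm
        · rw [mul_div_assoc']
          gcongr
          calc u = u * 1 := (mul_one u).symm
            _ ≤ u * m := by gcongr
      · rw [min_eq_left h1, one_mul]
        exact min_le_min le_rfl (by gcongr)
    calc min 1 (u / t) ≤ min 1 u * min 1 (m / t) := key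
      _ ≤ c * min 1 u * min 1 (m / t) := by
          have h0 : 0 ≤ min 1 u := le_min zero_le_one hu
          have h1 : 0 ≤ min 1 (m / t) := le_min zero_le_one (by positivity)
          calc min 1 u * min 1 (m / t) ≤ (c * min 1 u) * min 1 (m / t) :=
                mul_le_mul_of_nonneg_right (le_mul_of_one_le_left h0 hc) h1
            _ = c * min 1 u * min 1 (m / t) := by ring

lemma coord_dist_le {d : ℕ} (i : Fin d) (x y : EuclideanSpace ℝ (Fin d)) :
    |x i - y i| ≤ dist x y := by
  rw [EuclideanSpace.dist_eq, ← Real.dist_eq]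
  have h1 : dist (x i) (y i) ^ 2 ≤ ∑ j, dist (x j) (y j) ^ 2 :=
    Finset.single_le_sum (f := fun j => dist (x j) (y j) ^ 2) (fun j _ => sq_nonneg _)
      (Finset.mem_univ i)
  calc dist (x i) (y i) = Real.sqrt (dist (x i) (y i) ^ 2) := (Real.sqrt_sq dist_nonneg).symm
    _ ≤ _ := Real.sqrt_le_sqrt h1

lemma lb_half {d : ℕ} (hd : 0 < d) (b : ℝ) (z : EuclideanSpace ℝ (Fin d))
    (S : Set (EuclideanSpace ℝ (Fin d))) (hS : S ⊆ (halfSpace d hd b)ᶜ) (hne : S.Nonempty) :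
    z ⟨d - 1, Nat.sub_lt hd one_pos⟩ - b ≤ infDist z S := by
  set i : Fin d := ⟨d - 1, Nat.sub_lt hd one_pos⟩
  by_contra h
  push_neg at h
  rw [infDist_lt_iff hne] at h
  obtain ⟨y, hy, hlt⟩ := h
  have hyb : y i ≤ b := by
    have := hS hy
    simpa [halfSpace, not_lt] using this
  have : z i - y i ≤ dist z y := le_trans (le_abs_self _) (coord_dist_le i z y)
  linarith

lemma ub_half {d : ℕ} (hd : 0 < d) (b : ℝ) (z : EuclideanSpace ℝ (Fin d)) :
    infDist z (halfSpace d hd b)ᶜ ≤ |z ⟨d - 1, Nat.sub_lt hd one_pos⟩ - b| := by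
  set i : Fin d := ⟨d - 1, Nat.sub_lt hd one_pos⟩
  set y : EuclideanSpace ℝ (Fin d) := z + (b - z i) • EuclideanSpace.single i 1 with hy
  have hyi : y i = b := by
    simp [hy, EuclideanSpace.single_apply]
  have hymem : y ∈ (halfSpace d hd b)ᶜ := by
    simp only [halfSpace, Set.mem_compl_iff, Set.mem_setOf_eq, not_lt]; exact le_of_eq hyi
  calc infDist z (halfSpace d hd b)ᶜ ≤ dist z y := infDist_le_dist_of_mem hymem
    _ = |z i - b| := by
        rw [dist_eq_norm, hy]
        have : z - (z + (b - z i) • EuclideanSpace.single i 1)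
            = (z i - b) • EuclideanSpace.single i (1:ℝ) := by
          rw [sub_smul, sub_eq_iff_eq_add]
          module
        rw [this, norm_smul, EuclideanSpace.norm_single]
        simp

lemma half_compl_nonempty {d : ℕ} (hd : 0 < d) (b : ℝ) :
    ((halfSpace d hd b)ᶜ : Set (EuclideanSpace ℝ (Fin d))).Nonempty := by
  refine ⟨(b - 1) • EuclideanSpace.single ⟨d - 1, Nat.sub_lt hd one_pos⟩ (1:ℝ), ?_⟩
  simp [halfSpace, EuclideanSpace.single_apply]

/-- for `D` open with `H_a ⊆ D ⊆ H_0`, `s = max 1 a`, `t₀ = s^α`, there is `c > 0`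
such that for `x ∈ D`, `t > 5^α t₀` and `x₀ = x + 2s e_d`,
`c⁻¹ (1 ∧ δ_D(x)^α)(1 ∧ δ_{H_0}(x₀)^α/t) ≤ 1 ∧ δ_D(x)^α/t
  ≤ c (1 ∧ δ_D(x)^α)(1 ∧ δ_{H_a}(x₀)^α/t)`. -/
theorem statement0 (d : ℕ) (hd : 0 < d) (α a : ℝ) (hα0 : 0 < α) (hα2 : α < 2) (ha : 0 < a)
    (D : Set (EuclideanSpace ℝ (Fin d))) (hDopen : IsOpen D)
    (hDa : halfSpace d hd a ⊆ D) (hD0 : D ⊆ halfSpace d hd 0) :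
    ∃ c : ℝ, 0 < c ∧ ∀ x ∈ D, ∀ t : ℝ, 5 ^ α * (max 1 a) ^ α < t →
      (c⁻¹ * min 1 (infDist x Dᶜ ^ α) *
          min 1 (infDist
              (x + (2 * max 1 a) •
                EuclideanSpace.single (⟨d - 1, Nat.sub_lt hd one_pos⟩ : Fin d) (1 : ℝ))
              (halfSpace d hd 0)ᶜ ^ α / t)
        ≤ min 1 (infDist x Dᶜ ^ α / t)) ∧
      (min 1 (infDist x Dᶜ ^ α / t)
        ≤ c * min 1 (infDist x Dᶜ ^ α) *
          min 1 (infDist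
              (x + (2 * max 1 a) •
                EuclideanSpace.single (⟨d - 1, Nat.sub_lt hd one_pos⟩ : Fin d) (1 : ℝ))
              (halfSpace d hd a)ᶜ ^ α / t)) := by
  refine ⟨(4 * max 1 a) ^ α, Real.rpow_pos_of_pos (by positivity) α, ?_⟩
  intro x hx t ht
  set s : ℝ := max 1 a with hs
  have hs1 : (1:ℝ) ≤ s := le_max_left _ _
  have hsa : a ≤ s := le_max_right _ _
  set i : Fin d := ⟨d - 1, Nat.sub_lt hd one_pos⟩ with hi
  set x₀ : EuclideanSpace ℝ (Fin d) := x + (2 * s) • EuclideanSpace.single i (1:ℝ) with hx₀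
  have hx0i : x₀ i = x i + 2 * s := by
    simp [hx₀, EuclideanSpace.single_apply]
  have hX : 0 < x i := by
    have := hD0 hx
    simpa [halfSpace, hi] using this
  have hDcne : Dᶜ.Nonempty := (half_compl_nonempty hd 0).mono (Set.compl_subset_compl.2 hD0)
  set δ : ℝ := infDist x Dᶜ with hδ
  have hδ0 : 0 ≤ δ := infDist_nonneg
  have hδX : δ ≤ x i := by
    calc δ ≤ infDist x (halfSpace d hd 0)ᶜ :=
          infDist_le_infDist_of_subset (Set.compl_subset_compl.2 hD0) (half_compl_nonempty hd 0)
      _ ≤ |x i - 0| := ub_half hd 0 x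
      _ = x i := by rw [sub_zero, abs_of_pos hX]
  have hXδ : x i - a ≤ δ := lb_half hd a x Dᶜ (Set.compl_subset_compl.2 hDa) hDcne
  set n0 : ℝ := infDist x₀ (halfSpace d hd 0)ᶜ with hn0def
  have hn00 : 0 ≤ n0 := infDist_nonneg
  have hnub : n0 ≤ x i + 2 * s := by
    calc n0 ≤ |x₀ i - 0| := ub_half hd 0 x₀
      _ = x i + 2 * s := by rw [hx0i, sub_zero]; exact abs_of_pos (by nlinarith)
  set m0 : ℝ := infDist x₀ (halfSpace d hd a)ᶜ with hm0def
  have hmlb : x i + 2 * s - a ≤ m0 := by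
    have h := lb_half hd a x₀ (halfSpace d hd a)ᶜ subset_rfl (half_compl_nonempty hd a)
    rw [hx0i] at h
    linarith [h]
  have h1t : (1:ℝ) ≤ t := by
    have h5 : (1:ℝ) ≤ 5 ^ α := Real.one_le_rpow (by norm_num) hα0.le
    have hsα : (1:ℝ) ≤ s ^ α := Real.one_le_rpow hs1 hα0.le
    nlinarith
  have hmax : (max 1 δ) ^ α = max 1 (δ ^ α) := by
    rcases le_total 1 δ with h | h
    · rw [max_eq_right h, max_eq_right (Real.one_le_rpow h hα0.le)]
    · rw [max_eq_left h, Real.one_rpow, max_eq_left (Real.rpow_le_one hδ0 h hα0.le)]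
  have hn : n0 ^ α ≤ (4 * s) ^ α * max 1 (δ ^ α) := by
    have h4 : n0 ≤ 4 * s * max 1 δ := by
      have h1 : (1:ℝ) ≤ max 1 δ := le_max_left _ _
      have h2 : δ ≤ max 1 δ := le_max_right _ _
      nlinarith
    calc n0 ^ α ≤ (4 * s * max 1 δ) ^ α := Real.rpow_le_rpow hn00 h4 hα0.le
      _ = (4 * s) ^ α * (max 1 δ) ^ α := Real.mul_rpow (by positivity) (by positivity)
      _ = (4 * s) ^ α * max 1 (δ ^ α) := by rw [hmax]
  have hm1 : (1:ℝ) ≤ m0 ^ α := Real.one_le_rpow (by nlinarith) hα0.le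
  have hmu : δ ^ α ≤ m0 ^ α := Real.rpow_le_rpow hδ0 (by nlinarith) hα0.le
  have hc : (1:ℝ) ≤ (4 * s) ^ α := Real.one_le_rpow (by nlinarith) hα0.le
  exact coreMin (δ ^ α) (n0 ^ α) (m0 ^ α) ((4 * s) ^ α) t (Real.rpow_nonneg hδ0 α)
    (Real.rpow_nonneg hn00 α) hc h1t hn hm1 hmu
end

section
/- Let d ≥ 1 be an integer and a > 0. Set s := max(1, a). Let D ⊆ ℝ^d be an open set with H_a ⊆ D ⊆ H_0. Then for every x ∈ D, writing x₀ := x + 2s·e_d where e_d is the d-th standard basis vector, one has δ_D(x) + s ≤ δ_{H_a}(x₀) ≤ δ_D(x) + 2s and δ_D(x) + 2s ≤ δ_{H_0}(x₀) ≤ δ_D(x) + 3s. -/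
open Metric

lemma abs_apply_le_norm {d : ℕ} (v : EuclideanSpace ℝ (Fin d)) (i : Fin d) :
    |v i| ≤ ‖v‖ := by
  have h := abs_real_inner_le_norm (EuclideanSpace.single i (1 : ℝ)) v
  rw [EuclideanSpace.inner_single_left, EuclideanSpace.norm_single] at h
  simpa using h


lemma halfSpace_compl_nonempty (d : ℕ) (hd : 0 < d) (b : ℝ) :
    ((halfSpace d hd b)ᶜ).Nonempty := by
  refine ⟨WithLp.toLp 2 (fun _ => b : Fin d → ℝ), ?_⟩
  simp [halfSpace]

lemma infDist_compl_halfSpace (d : ℕ) (hd : 0 < d) (b : ℝ)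
    (y : EuclideanSpace ℝ (Fin d)) (hy : b ≤ y ⟨d - 1, Nat.sub_lt hd one_pos⟩) :
    infDist y (halfSpace d hd b)ᶜ = y ⟨d - 1, Nat.sub_lt hd one_pos⟩ - b := by
  set i : Fin d := ⟨d - 1, Nat.sub_lt hd one_pos⟩
  apply le_antisymm
  · have hz : (y - (y i - b) • EuclideanSpace.single i (1 : ℝ)) ∈ (halfSpace d hd b)ᶜ := by
      simp [halfSpace, Set.mem_setOf_eq, EuclideanSpace.single_apply, i]
    calc infDist y (halfSpace d hd b)ᶜ ≤ dist y (y - (y i - b) • EuclideanSpace.single i (1:ℝ)) :=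
          infDist_le_dist_of_mem hz
      _ = y i - b := by
          rw [dist_eq_norm]
          simp only [sub_sub_cancel]
          rw [norm_smul, EuclideanSpace.norm_single]
          simp [abs_of_nonneg (sub_nonneg.mpr hy)]
  · refine le_of_not_gt fun hlt => ?_
    obtain ⟨z, hz, hdz⟩ := (infDist_lt_iff (halfSpace_compl_nonempty d hd b)).mp hlt
    have hz' : z i ≤ b := not_lt.mp hz
    have h1 : |y i - z i| ≤ dist y z := by
      have := abs_apply_le_norm (y - z) i
      rwa [dist_eq_norm]
    have h2 : y i - z i ≤ |y i - z i| := le_abs_self _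
    linarith

/-- for `D` open with `H_a ⊆ D ⊆ H_0`, `s = max 1 a`, `x ∈ D`, and
`x₀ := x + 2s e_d`, one has `δ_D(x) + s ≤ δ_{H_a}(x₀) ≤ δ_D(x) + 2s` and
`δ_D(x) + 2s ≤ δ_{H_0}(x₀) ≤ δ_D(x) + 3s`. -/
theorem statement1 (d : ℕ) (hd : 0 < d) (a : ℝ) (ha : 0 < a)
    (D : Set (EuclideanSpace ℝ (Fin d))) (hDopen : IsOpen D)
    (hDa : halfSpace d hd a ⊆ D) (hD0 : D ⊆ halfSpace d hd 0) :
    ∀ x ∈ D,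
      (infDist x Dᶜ + max 1 a
          ≤ infDist
              (x + (2 * max 1 a) •
                EuclideanSpace.single (⟨d - 1, Nat.sub_lt hd one_pos⟩ : Fin d) (1 : ℝ))
              (halfSpace d hd a)ᶜ ∧
        infDist
            (x + (2 * max 1 a) •
              EuclideanSpace.single (⟨d - 1, Nat.sub_lt hd one_pos⟩ : Fin d) (1 : ℝ))
            (halfSpace d hd a)ᶜ
          ≤ infDist x Dᶜ + 2 * max 1 a) ∧
      (infDist x Dᶜ + 2 * max 1 a
          ≤ infDist
              (x + (2 * max 1 a) •
                EuclideanSpace.single (⟨d - 1, Nat.sub_lt hd one_pos⟩ : Fin d) (1 : ℝ))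
              (halfSpace d hd 0)ᶜ ∧
        infDist
            (x + (2 * max 1 a) •
              EuclideanSpace.single (⟨d - 1, Nat.sub_lt hd one_pos⟩ : Fin d) (1 : ℝ))
            (halfSpace d hd 0)ᶜ
          ≤ infDist x Dᶜ + 3 * max 1 a) := by
  intro x hx
  set i : Fin d := ⟨d - 1, Nat.sub_lt hd one_pos⟩ with hi
  set s : ℝ := max 1 a with hs
  have hs1 : (1:ℝ) ≤ s := le_max_left _ _
  have hsa : a ≤ s := le_max_right _ _
  have ht : 0 < x i := hD0 hx
  set x₀ : EuclideanSpace ℝ (Fin d) :=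
    x + (2 * s) • EuclideanSpace.single i (1 : ℝ) with hx₀
  have hx₀i : x₀ i = x i + 2 * s := by
    simp [hx₀, EuclideanSpace.single_apply]
  have hHa : infDist x₀ (halfSpace d hd a)ᶜ = x i + 2 * s - a := by
    rw [infDist_compl_halfSpace d hd a x₀ (by rw [hx₀i]; nlinarith), hx₀i]
  have hH0 : infDist x₀ (halfSpace d hd 0)ᶜ = x i + 2 * s := by
    rw [infDist_compl_halfSpace d hd 0 x₀ (by rw [hx₀i]; nlinarith), hx₀i, sub_zero]
  have hne0 : ((halfSpace d hd 0)ᶜ).Nonempty := halfSpace_compl_nonempty d hd 0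
  have hneD : (Dᶜ).Nonempty := hne0.mono (Set.compl_subset_compl.mpr hD0)
  have hDle : infDist x Dᶜ ≤ x i := by
    have h := infDist_le_infDist_of_subset (Set.compl_subset_compl.mpr hD0) hne0 (x := x)
    rwa [infDist_compl_halfSpace d hd 0 x ht.le, sub_zero] at h
  have hDge : x i - a ≤ infDist x Dᶜ := by
    rcases le_or_gt (x i) a with h | h
    · have := infDist_nonneg (x := x) (s := Dᶜ); linarith
    · have h2 := infDist_le_infDist_of_subset (Set.compl_subset_compl.mpr hDa) hneD (x := x)
      rwa [infDist_compl_halfSpace d hd a x h.le] at h2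
  refine ⟨⟨?_, ?_⟩, ?_, ?_⟩ <;> [rw [hHa]; rw [hHa]; rw [hH0]; rw [hH0]] <;>
    linarith
end
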